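/- If A ⊂ ℂ is a closed discrete infinite subset and h is a biholomorphic automorphism of ℂ \ A of infinite order, then h is of the form h(z) = z + b for some nonzero complex number b. -/

import Mathlib

open Metric Filter Set Function Complex Topology Bornology

lemma aux_compact_finite {A : Set ℂ} (hA : IsClosed A) (hdisc : DiscreteTopology A)
    {K : Set ℂ} (hK : IsCompact K) : (A ∩ K).Finite := by
  have hc : IsCompact (A ∩ K) := hK.inter_left hA
  have : DiscreteTopology ↥(A ∩ K) := DiscreteTopology.of_subset hdisc inter_subset_left
  exact hc.finite (isDiscrete_iff_discreteTopology.mpr this)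


lemma aux_unbounded {A : Set ℂ} (hA : IsClosed A) (hdisc : DiscreteTopology A)
    (hinf : A.Infinite) (R : ℝ) : ∃ a ∈ A, R < ‖a‖ := by
  by_contra hcon
  push_neg at hcon
  have hsub : A ⊆ Metric.closedBall 0 R := fun a ha => by
    simpa [Metric.mem_closedBall, dist_eq_norm] using hcon a ha
  have heq : A ∩ Metric.closedBall 0 R = A := inter_eq_left.mpr hsub
  have hfin : (A ∩ Metric.closedBall 0 R).Finite := by
    have hc : IsCompact (A ∩ Metric.closedBall 0 R) :=
      (isCompact_closedBall 0 R).inter_left hA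
    have : DiscreteTopology ↥(A ∩ Metric.closedBall 0 R) :=
      DiscreteTopology.of_subset hdisc inter_subset_left
    exact hc.finite (isDiscrete_iff_discreteTopology.mpr this)
  exact hinf (by rwa [heq] at hfin)

lemma aux_bounded_near {A : Set ℂ} (hA : IsClosed A) (hdisc : DiscreteTopology A)
    (hinf : A.Infinite) {h : ℂ → ℂ}
    (hmaps : Set.MapsTo h Aᶜ Aᶜ) (hhol : DifferentiableOn ℂ h Aᶜ)
    (hinj : Set.InjOn h Aᶜ) {a : ℂ} (ha : a ∈ A) :
    ∃ r > 0, (∀ z ∈ Metric.ball a r, z ≠ a → z ∉ A) ∧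
      BddAbove (norm ∘ h '' (Metric.ball a r \ {a})) := by
  obtain ⟨r, hr, hiso⟩ : ∃ r > 0, ∀ z ∈ Metric.ball a r, z ≠ a → z ∉ A := by
    have hd : Disjoint (𝓝[≠] a) (𝓟 A) := (isClosed_and_discrete_iff.mp ⟨hA, isDiscrete_iff_discreteTopology.mpr hdisc⟩) a
    have h2 : Aᶜ ∈ 𝓝[≠] a := disjoint_principal_right.mp hd
    rw [Metric.mem_nhdsWithin_iff] at h2
    obtain ⟨r, hr, hsub⟩ := h2
    exact ⟨r, hr, fun z hz hne => hsub ⟨hz, hne⟩⟩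
  have hsubA : ∀ ρ : ℝ, ρ ≤ r → Metric.ball a ρ \ {a} ⊆ Aᶜ := by
    intro ρ hρ z hz
    exact hiso z (Metric.ball_subset_ball hρ hz.1) hz.2
  by_cases hcase : ∃ ρ, 0 < ρ ∧ ρ ≤ r ∧ ∃ w : ℂ, ∃ δ > 0,
      ∀ z ∈ Metric.ball a ρ \ {a}, δ ≤ ‖h z - w‖
  · obtain ⟨ρ, hρ, hρr, w, δ, hδ, hsep⟩ := hcase
    set φ : ℂ → ℂ := fun z => (h z - w)⁻¹ with hφ
    have hhw : ∀ z ∈ Metric.ball a ρ \ {a}, h z - w ≠ 0 := by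
      intro z hz hc
      have := hsep z hz
      rw [hc, norm_zero] at this; linarith
    have hφd : DifferentiableOn ℂ φ (Metric.ball a ρ \ {a}) :=
      DifferentiableOn.inv ((hhol.mono (hsubA ρ hρr)).sub_const w) hhw
    have hφb : BddAbove (norm ∘ φ '' (Metric.ball a ρ \ {a})) := by
      refine ⟨δ⁻¹, ?_⟩
      rintro x ⟨z, hz, rfl⟩
      simp only [comp_apply, hφ, norm_inv]
      exact inv_anti₀ hδ (hsep z hz)
    set Φ := Function.update φ a (limUnder (𝓝[≠] a) φ) with hΦdef
    have hΦ : DifferentiableOn ℂ Φ (Metric.ball a ρ) :=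
      Complex.differentiableOn_update_limUnder_of_bddAbove
        (Metric.ball_mem_nhds a hρ) hφd hφb
    have hΦφ : ∀ z ∈ Metric.ball a ρ \ {a}, Φ z = φ z := by
      intro z hz; exact Function.update_of_ne hz.2 _ _
    by_cases h0 : Φ a = 0
    · exfalso
      have hΦa : AnalyticAt ℂ Φ a := hΦ.analyticAt (Metric.ball_mem_nhds a hρ)
      have hnotconst : ¬ ∀ᶠ z in 𝓝 a, Φ z = Φ a := by
        intro hev
        rw [Metric.eventually_nhds_iff] at hev
        obtain ⟨ε, hε, hev⟩ := hev
        set z' := a + ((min ε ρ)/2 : ℝ) with hz'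
        have hmpos : 0 < min ε ρ / 2 := half_pos (lt_min hε hρ)
        have hdist : dist z' a = min ε ρ / 2 := by
          rw [dist_eq_norm, hz', add_sub_cancel_left, Complex.norm_real, Real.norm_eq_abs,
            abs_of_pos hmpos]
        have hz'ne : z' ≠ a := by
          intro hc
          rw [hc] at hdist; simp at hdist; linarith
        have hlt1 : dist z' a < ρ := by
          rw [hdist]
          have := min_le_right ε ρ; linarith
        have hlt2 : dist z' a < ε := by
          rw [hdist]
          have := min_le_left ε ρ; linarith
        have hz'mem : z' ∈ Metric.ball a ρ \ {a} := ⟨hlt1, hz'ne⟩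
        have h1 : Φ z' = Φ a := hev hlt2
        have h2 : Φ z' = φ z' := hΦφ z' hz'mem
        have h3 : φ z' ≠ 0 := inv_ne_zero (hhw z' hz'mem)
        rw [h2, h0] at h1
        exact h3 h1
      have hopen := hΦa.eventually_constant_or_nhds_le_map_nhds.resolve_left hnotconst
      have himg : Φ '' (Metric.ball a ρ) ∈ 𝓝 (Φ a) :=
        hopen (Filter.image_mem_map (Metric.ball_mem_nhds a hρ))
      rw [h0] at himg
      obtain ⟨ε, hε, hball⟩ := Metric.mem_nhds_iff.mp himg
      obtain ⟨a', ha', ha'n⟩ := aux_unbounded hA hdisc hinf (ε⁻¹ + ‖w‖)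
      have hawn : ε⁻¹ < ‖a' - w‖ := by
        have := norm_sub_norm_le a' w
        linarith
      have hawne : a' - w ≠ 0 := by
        intro hc; rw [hc, norm_zero] at hawn; have := inv_pos.mpr hε; linarith
      set u := (a' - w)⁻¹ with hu
      have hun : ‖u‖ < ε := by
        rw [hu, norm_inv]
        exact inv_lt_of_inv_lt₀ hε hawn
      have humem : u ∈ Metric.ball (0:ℂ) ε := by rwa [Metric.mem_ball, dist_zero_right]
      obtain ⟨z, hz, hzu⟩ := hball humem
      have hune : u ≠ 0 := inv_ne_zero hawne
      have hzne : z ≠ a := by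
        intro hc; rw [hc, h0] at hzu
        exact hune hzu.symm
      have hzmem : z ∈ Metric.ball a ρ \ {a} := ⟨hz, hzne⟩
      have hφu0 : φ z = u := by rw [← hΦφ z hzmem]; exact hzu
      have hφu : (h z - w)⁻¹ = u := by simpa [hφ] using hφu0
      have h1 : h z - w = a' - w := by
        rw [← inv_inv (h z - w), hφu, hu, inv_inv]
      have hhz : h z = a' := sub_left_inj.mp h1
      have : h z ∈ Aᶜ := hmaps (hsubA ρ hρr hzmem)
      rw [hhz] at this
      exact this ha'
    · -- Φ a ≠ 0 : h is bounded near a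
      have hcont : ContinuousAt Φ a :=
        (hΦ.differentiableAt (Metric.ball_mem_nhds a hρ)).continuousAt
      have hΦapos : (0:ℝ) < ‖Φ a‖ := norm_pos_iff.mpr h0
      have hev := (Metric.tendsto_nhds.mp hcont) (‖Φ a‖/2) (by linarith)
      rw [Metric.eventually_nhds_iff] at hev
      obtain ⟨ε, hε, hev⟩ := hev
      set ρ' := min ε ρ with hρ'
      have hρ'pos : 0 < ρ' := lt_min hε hρ
      refine ⟨ρ', hρ'pos, fun z hz hzn => hiso z
        (Metric.ball_subset_ball (le_trans (min_le_right _ _) hρr) hz) hzn, ?_⟩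
      refine ⟨‖w‖ + 2/‖Φ a‖, ?_⟩
      rintro x ⟨z, hz, rfl⟩
      have hzρ : z ∈ Metric.ball a ρ \ {a} :=
        ⟨Metric.ball_subset_ball (min_le_right _ _) hz.1, hz.2⟩
      have hΦz : Φ z = φ z := hΦφ z hzρ
      have hΦzb : dist (Φ z) (Φ a) < ‖Φ a‖/2 :=
        hev (show dist z a < ε from lt_of_lt_of_le hz.1 (min_le_left _ _))
      have hlow : ‖Φ a‖/2 ≤ ‖φ z‖ := by
        rw [← hΦz]
        have h1 : ‖Φ a‖ - ‖Φ z‖ ≤ dist (Φ z) (Φ a) := by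
          rw [dist_eq_norm]
          have := norm_sub_norm_le (Φ a) (Φ z)
          rwa [norm_sub_rev] at this
        linarith
      have hφpos : (0:ℝ) < ‖φ z‖ := lt_of_lt_of_le (by linarith) hlow
      have hinv : ‖h z - w‖ = ‖φ z‖⁻¹ := by
        rw [hφ]; simp [norm_inv]
      have hb2 : ‖h z - w‖ ≤ 2/‖Φ a‖ := by
        rw [hinv]
        rw [inv_le_comm₀ hφpos (by positivity)]
        calc (2/‖Φ a‖)⁻¹ = ‖Φ a‖/2 := by rw [inv_div]
        _ ≤ ‖φ z‖ := hlow
      calc (norm ∘ h) z = ‖h z‖ := rfl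
      _ ≤ ‖w‖ + ‖h z - w‖ := by
            have := norm_add_le w (h z - w)
            simpa using this
      _ ≤ ‖w‖ + 2/‖Φ a‖ := by linarith
  · push_neg at hcase
    exfalso
    set z1 : ℂ := a + (r/2 : ℝ) with hz1def
    have hd1 : dist z1 a = r/2 := by
      rw [dist_eq_norm, hz1def, add_sub_cancel_left, Complex.norm_real, Real.norm_eq_abs,
        abs_of_pos (by linarith)]
    have hz1ne : z1 ≠ a := by
      intro hc; rw [hc, dist_self] at hd1; linarith
    have hz1mem : z1 ∈ Metric.ball a r \ {a} := ⟨by rw [Metric.mem_ball, hd1]; linarith, hz1ne⟩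
    have hz1A : z1 ∈ Aᶜ := hsubA r le_rfl hz1mem
    have hB1sub : Metric.ball z1 (r/8) ⊆ Metric.ball a r \ {a} := by
      intro z hz
      rw [Metric.mem_ball] at hz
      have ht1 : dist z a ≤ dist z z1 + dist z1 a := dist_triangle _ _ _
      have ht2 : dist z1 a ≤ dist z1 z + dist z a := dist_triangle _ _ _
      rw [dist_comm z1 z] at ht2
      constructor
      · rw [Metric.mem_ball]; rw [hd1] at ht1; linarith
      · intro hc
        rw [mem_singleton_iff] at hc
        rw [hc, dist_comm, hd1] at hz
        linarith
    have hB1A : Metric.ball z1 (r/8) ⊆ Aᶜ := fun z hz => hsubA r le_rfl (hB1sub hz)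
    have han : AnalyticAt ℂ h z1 := hhol.analyticAt (hA.isOpen_compl.mem_nhds hz1A)
    have hnotconst : ¬ ∀ᶠ z in 𝓝 z1, h z = h z1 := by
      intro hev
      rw [Metric.eventually_nhds_iff] at hev
      obtain ⟨ε, hε, hev⟩ := hev
      set z' := z1 + ((min ε (r/8))/2 : ℝ) with hz'def
      have hmpos : 0 < min ε (r/8) / 2 := half_pos (lt_min hε (by linarith))
      have hdz' : dist z' z1 = min ε (r/8) / 2 := by
        rw [dist_eq_norm, hz'def, add_sub_cancel_left, Complex.norm_real, Real.norm_eq_abs,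
          abs_of_pos hmpos]
      have hz'ne : z' ≠ z1 := by
        intro hc; rw [hc, dist_self] at hdz'; linarith
      have hz'B1 : z' ∈ Metric.ball z1 (r/8) := by
        rw [Metric.mem_ball, hdz']
        have := min_le_right ε (r/8); linarith
      have hz'A : z' ∈ Aᶜ := hB1A hz'B1
      have : h z' = h z1 := hev (by rw [hdz']; have := min_le_left ε (r/8); linarith)
      exact hz'ne (hinj hz'A hz1A this)
    have hopen := han.eventually_constant_or_nhds_le_map_nhds.resolve_left hnotconst
    have himg : h '' (Metric.ball z1 (r/8)) ∈ 𝓝 (h z1) :=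
      hopen (Filter.image_mem_map (Metric.ball_mem_nhds z1 (by linarith)))
    obtain ⟨ε, hε, hball⟩ := Metric.mem_nhds_iff.mp himg
    obtain ⟨z2, hz2, hz2close⟩ := hcase (r/4) (by linarith) (by linarith) (h z1) ε hε
    have hz2A : z2 ∈ Aᶜ := hsubA (r/4) (by linarith) hz2
    have hz2img : h z2 ∈ Metric.ball (h z1) ε := by
      rw [Metric.mem_ball, dist_eq_norm]; exact hz2close
    obtain ⟨z1', hz1'B, hz1'eq⟩ := hball hz2img
    have hz1'A : z1' ∈ Aᶜ := hB1A hz1'B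
    have heq : z1' = z2 := hinj hz1'A hz2A hz1'eq
    have hfar : r/4 < dist z1' a := by
      rw [Metric.mem_ball] at hz1'B
      have ht2 : dist z1 a ≤ dist z1 z1' + dist z1' a := dist_triangle _ _ _
      rw [dist_comm z1 z1'] at ht2
      rw [hd1] at ht2; linarith
    have hnear : dist z2 a < r/4 := hz2.1
    rw [heq] at hfar; linarith


lemma aux_extension {A : Set ℂ} (hA : IsClosed A) {h : ℂ → ℂ}
    (hhol : DifferentiableOn ℂ h Aᶜ)
    (hbd : ∀ a ∈ A, ∃ r > 0, (∀ z ∈ Metric.ball a r, z ≠ a → z ∉ A) ∧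
      BddAbove (norm ∘ h '' (Metric.ball a r \ {a}))) :
    ∃ H : ℂ → ℂ, Differentiable ℂ H ∧ ∀ z ∈ Aᶜ, H z = h z := by
  classical
  set H : ℂ → ℂ := fun z => if z ∈ A then limUnder (𝓝[≠] z) h else h z with hHdef
  have hHeq : ∀ z ∈ Aᶜ, H z = h z := by
    intro z hz
    simp only [hHdef, if_neg hz]
  refine ⟨H, ?_, hHeq⟩
  intro z
  by_cases hz : z ∈ A
  · obtain ⟨r, hr, hiso, hb⟩ := hbd z hz
    have hsub : Metric.ball z r \ {z} ⊆ Aᶜ := fun y hy => hiso y hy.1 hy.2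
    set F := Function.update h z (limUnder (𝓝[≠] z) h) with hF
    have hFd : DifferentiableOn ℂ F (Metric.ball z r) :=
      Complex.differentiableOn_update_limUnder_of_bddAbove
        (Metric.ball_mem_nhds z hr) (hhol.mono hsub) hb
    have hFat : DifferentiableAt ℂ F z := hFd.differentiableAt (Metric.ball_mem_nhds z hr)
    have hHF : H =ᶠ[𝓝 z] F := by
      filter_upwards [Metric.ball_mem_nhds z hr] with y hy
      by_cases hyz : y = z
      · rw [hyz]
        simp only [hHdef, if_pos hz, hF, Function.update_self]
      · have hyA : y ∉ A := hiso y hy hyz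
        simp only [hHdef, if_neg hyA, hF, Function.update_of_ne hyz]
    exact hFat.congr_of_eventuallyEq hHF
  · have hmem : Aᶜ ∈ 𝓝 z := hA.isOpen_compl.mem_nhds hz
    have hHh : H =ᶠ[𝓝 z] h := by
      filter_upwards [hmem] with y hy
      exact hHeq y hy
    exact (hhol.differentiableAt hmem).congr_of_eventuallyEq hHh


lemma aux_affine {H G : ℂ → ℂ} (hH : Differentiable ℂ H) (hG : Differentiable ℂ G)
    (hGH : ∀ z, G (H z) = z) :
    ∃ c b : ℂ, c ≠ 0 ∧ ∀ z, H z = c * z + b := by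
  classical
  have hinj : Function.Injective H := fun x y e => by
    rw [← hGH x, ← hGH y, e]
  -- properness
  have prop : ∀ R : ℝ, ∃ M : ℝ, 0 < M ∧ ∀ z : ℂ, M ≤ ‖z‖ → R ≤ ‖H z‖ := by
    intro R
    have hc : IsCompact (G '' Metric.closedBall 0 R) :=
      (isCompact_closedBall (0:ℂ) R).image hG.continuous
    obtain ⟨M0, hM0⟩ := hc.isBounded.subset_closedBall 0
    refine ⟨max M0 0 + 1, by positivity, fun z hz => ?_⟩
    by_contra hcon
    push_neg at hcon
    have h1 : H z ∈ Metric.closedBall (0:ℂ) R := by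
      rw [Metric.mem_closedBall, dist_zero_right]; linarith
    have h2 : z ∈ G '' Metric.closedBall 0 R := ⟨H z, h1, hGH z⟩
    have h3 := hM0 h2
    rw [Metric.mem_closedBall, dist_zero_right] at h3
    have : M0 ≤ max M0 0 := le_max_left _ _
    linarith
  obtain ⟨M, hM, hMp⟩ := prop 1
  set K : ℂ → ℂ := fun z => (H z⁻¹)⁻¹ with hKdef
  have hKval : ∀ z : ℂ, z ≠ 0 → ‖z‖ < M⁻¹ → (1:ℝ) ≤ ‖H z⁻¹‖ := by
    intro z hz hzM
    apply hMp
    rw [norm_inv]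
    rw [le_inv_comm₀ hM (norm_pos_iff.mpr hz)]
    exact le_of_lt hzM
  have hKd : DifferentiableOn ℂ K (Metric.ball 0 M⁻¹ \ {0}) := by
    intro z hz
    have hz0 : z ≠ 0 := hz.2
    have hzM : ‖z‖ < M⁻¹ := by simpa [Metric.mem_ball, dist_zero_right] using hz.1
    have hne : H z⁻¹ ≠ 0 := by
      intro hc
      have := hKval z hz0 hzM; rw [hc, norm_zero] at this; linarith
    exact (((hH.differentiableAt.comp z (differentiableAt_inv hz0)).inv hne)).differentiableWithinAt
  have hKb : BddAbove (norm ∘ K '' (Metric.ball 0 M⁻¹ \ {0})) := by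
    refine ⟨1, ?_⟩
    rintro x ⟨z, hz, rfl⟩
    have hzM : ‖z‖ < M⁻¹ := by simpa [Metric.mem_ball, dist_zero_right] using hz.1
    simp only [comp_apply, hKdef, norm_inv]
    have := hKval z hz.2 hzM
    rw [inv_le_one_iff₀]
    right; exact this
  set K' := Function.update K 0 (limUnder (𝓝[≠] 0) K) with hK'def
  have hMinv : (0:ℝ) < M⁻¹ := inv_pos.mpr hM
  have hK'd : DifferentiableOn ℂ K' (Metric.ball 0 M⁻¹) :=
    Complex.differentiableOn_update_limUnder_of_bddAbove
      (Metric.ball_mem_nhds 0 hMinv) hKd hKb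
  have hK0 : Filter.Tendsto K (𝓝[≠] (0:ℂ)) (𝓝 0) := by
    rw [NormedAddCommGroup.tendsto_nhds_zero]
    intro ε hε
    obtain ⟨Mε, hMε, hMεp⟩ := prop (ε⁻¹ + 1)
    rw [eventually_nhdsWithin_iff]
    rw [Metric.eventually_nhds_iff]
    refine ⟨Mε⁻¹, inv_pos.mpr hMε, fun z hz hz0 => ?_⟩
    rw [dist_zero_right] at hz
    have h1 : Mε ≤ ‖z⁻¹‖ := by
      rw [norm_inv, le_inv_comm₀ hMε (norm_pos_iff.mpr hz0)]
      exact le_of_lt hz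
    have h2 := hMεp _ h1
    have hεpos : (0:ℝ) < ε⁻¹ + 1 := by positivity
    simp only [hKdef, norm_inv]
    rw [inv_lt_comm₀ (by linarith) hε]
    have : ε⁻¹ < ε⁻¹ + 1 := by linarith
    linarith
  have hK'0 : K' 0 = 0 := by
    simp only [hK'def, Function.update_self]
    exact hK0.limUnder_eq
  have hK'K : ∀ z : ℂ, z ≠ 0 → K' z = K z := fun z hz => Function.update_of_ne hz _ _
  have hK'a : AnalyticAt ℂ K' 0 := hK'd.analyticAt (Metric.ball_mem_nhds 0 hMinv)
  have hKne : ∀ z : ℂ, z ≠ 0 → ‖z‖ < M⁻¹ → K' z ≠ 0 := by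
    intro z hz hzM
    rw [hK'K z hz]
    simp only [hKdef]
    apply inv_ne_zero
    intro hc
    have := hKval z hz hzM; rw [hc, norm_zero] at this; linarith
  -- K' is injective on the ball
  have hK'inj : Set.InjOn K' (Metric.ball 0 M⁻¹) := by
    intro x hx y hy hxy
    rw [Metric.mem_ball, dist_zero_right] at hx hy
    by_cases hx0 : x = 0
    · by_cases hy0 : y = 0
      · rw [hx0, hy0]
      · exfalso
        rw [hx0, hK'0] at hxy
        exact hKne y hy0 hy hxy.symm
    · by_cases hy0 : y = 0
      · exfalso
        rw [hy0, hK'0] at hxy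
        exact hKne x hx0 hx hxy
      · rw [hK'K x hx0, hK'K y hy0] at hxy
        simp only [hKdef] at hxy
        have := hinj (inv_injective hxy)
        exact inv_injective this
  -- order of K' at 0
  have hnotzero : ¬ ∀ᶠ z in 𝓝 (0:ℂ), K' z = 0 := by
    intro hev
    rw [Metric.eventually_nhds_iff] at hev
    obtain ⟨ε, hε, hev⟩ := hev
    set z := ((min ε M⁻¹)/2 : ℝ) with hzdef
    have hmpos : 0 < min ε M⁻¹ / 2 := half_pos (lt_min hε hMinv)
    have hzn : ‖(z:ℂ)‖ = min ε M⁻¹/2 := by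
      rw [Complex.norm_real, Real.norm_eq_abs, abs_of_pos hmpos]
    have hzne : (z:ℂ) ≠ 0 := by
      intro hc; rw [hc, norm_zero] at hzn; linarith
    have h1 : K' (z:ℂ) = 0 := hev (by
      rw [dist_zero_right, hzn]; have := min_le_left ε M⁻¹; linarith)
    exact hKne (z:ℂ) hzne (by rw [hzn]; have := min_le_right ε M⁻¹; linarith) h1
  have hordne : analyticOrderAt K' 0 ≠ ⊤ := by
    simp only [ne_eq, analyticOrderAt_eq_top]; exact hnotzero
  lift analyticOrderAt K' 0 to ℕ using hordne with n hn
  obtain ⟨u, hu_an, hu0, hueq⟩ := (hK'a.analyticOrderAt_eq_natCast (n := n)).mp hn.symm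
  have hu0ne : u 0 ≠ 0 := hu0
  have hnpos : 0 < n := by
    rcases Nat.eq_zero_or_pos n with h0 | h
    · exfalso
      have := hueq.self_of_nhds
      rw [h0, pow_zero, one_smul, hK'0] at this
      exact hu0ne this.symm
    · exact h
  -- n = 1
  have hn1 : n = 1 := by
    by_contra hne1
    have hn2 : 2 ≤ n := by omega
    have hncne : (n:ℂ) ≠ 0 := Nat.cast_ne_zero.mpr hnpos.ne'
    -- a neighborhood with all needed properties
    have hu0pos : (0:ℝ) < ‖u 0‖ := norm_pos_iff.mpr hu0ne
    have hucont := (Metric.tendsto_nhds.mp hu_an.continuousAt.tendsto) (‖u 0‖/2) (by linarith)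
    have hein := hu_an.eventually_analyticAt
    obtain ⟨t0, ht0, hprop⟩ := Metric.eventually_nhds_iff.mp ((hueq.and hucont).and hein)
    set t1 := min t0 M⁻¹ with ht1def
    have ht1 : 0 < t1 := lt_min ht0 hMinv
    have hprop' : ∀ z : ℂ, ‖z‖ < t1 →
        (K' z = z ^ n * u z ∧ u z ≠ 0 ∧ u z / u 0 ∈ slitPlane) := by
      intro z hz
      have hzt0 : dist z 0 < t0 := by
        rw [dist_zero_right]; exact lt_of_lt_of_le hz (min_le_left _ _)
      obtain ⟨⟨heq, hdist⟩, _⟩ := hprop hzt0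
      rw [sub_zero, smul_eq_mul] at heq
      have hd2 : ‖u z - u 0‖ < ‖u 0‖/2 := by rwa [dist_eq_norm] at hdist
      have huzne : u z ≠ 0 := by
        intro hc
        rw [hc, zero_sub, norm_neg] at hd2; linarith
      have hslit : u z / u 0 ∈ slitPlane := by
        have h1 : ‖u z / u 0 - 1‖ < 1 := by
          rw [div_sub_one hu0ne, norm_div]
          rw [div_lt_one hu0pos]
          linarith
        have := mem_slitPlane_of_norm_lt_one h1
        simpa using this
      exact ⟨heq, huzne, hslit⟩
    obtain ⟨c0, hc0⟩ := IsAlgClosed.exists_pow_nat_eq (u 0) hnpos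
    have hc0ne : c0 ≠ 0 := by
      intro hc; rw [hc, zero_pow hnpos.ne'] at hc0; exact hu0ne hc0.symm
    set v : ℂ → ℂ := fun z => c0 * Complex.exp (Complex.log (u z / u 0) / n) with hvdef
    set ψ : ℂ → ℂ := fun z => z * v z with hψdef
    have hvne : ∀ z : ℂ, v z ≠ 0 := fun z =>
      mul_ne_zero hc0ne (Complex.exp_ne_zero _)
    have hvpow : ∀ z : ℂ, ‖z‖ < t1 → v z ^ n = u z := by
      intro z hz
      obtain ⟨_, huzne, _⟩ := hprop' z hz
      simp only [hvdef]
      rw [mul_pow, hc0, ← Complex.exp_nat_mul, mul_div_cancel₀ _ hncne, Complex.exp_log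
        (div_ne_zero huzne hu0ne), mul_div_cancel₀ _ hu0ne]
    have hψpow : ∀ z : ℂ, ‖z‖ < t1 → ψ z ^ n = K' z := by
      intro z hz
      obtain ⟨heq, _, _⟩ := hprop' z hz
      simp only [hψdef]
      rw [mul_pow, hvpow z hz, heq]
    have hψ0 : ψ 0 = 0 := by simp [hψdef]
    have hψa : AnalyticAt ℂ ψ 0 := by
      have h1 : AnalyticAt ℂ (fun z => u z / u 0) 0 := hu_an.div analyticAt_const hu0ne
      have hslit1 : u 0 / u 0 ∈ slitPlane := by
        rw [div_self hu0ne]; exact Complex.one_mem_slitPlane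
      have h2 : AnalyticAt ℂ (fun z => Complex.log (u z / u 0)) 0 := h1.clog hslit1
      have h3 : AnalyticAt ℂ (fun z => Complex.log (u z / u 0) / n) 0 :=
        h2.div analyticAt_const hncne
      have h4 := h3.cexp
      exact analyticAt_id.mul (analyticAt_const.mul h4)
    have hψnc : ¬ ∀ᶠ z in 𝓝 (0:ℂ), ψ z = ψ 0 := by
      intro hev
      rw [Metric.eventually_nhds_iff] at hev
      obtain ⟨ε, hε, hev⟩ := hev
      set z := ((ε/2 : ℝ) : ℂ) with hzdef
      have hzn : ‖z‖ = ε/2 := by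
        rw [hzdef, Complex.norm_real, Real.norm_eq_abs, abs_of_pos (by linarith)]
      have hzne : z ≠ 0 := by intro hc; rw [hc, norm_zero] at hzn; linarith
      have h1 : ψ z = 0 := by
        rw [hev (by rw [dist_zero_right, hzn]; linarith), hψ0]
      simp only [hψdef] at h1
      rcases mul_eq_zero.mp h1 with h | h
      · exact hzne h
      · exact hvne z h
    have hopen := hψa.eventually_constant_or_nhds_le_map_nhds.resolve_left hψnc
    have himg : ψ '' (Metric.ball 0 t1) ∈ 𝓝 (ψ 0) :=
      hopen (Filter.image_mem_map (Metric.ball_mem_nhds 0 ht1))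
    rw [hψ0] at himg
    obtain ⟨ε, hε, hball⟩ := Metric.mem_nhds_iff.mp himg
    set ζ : ℂ := Complex.exp (2 * Real.pi * Complex.I / n) with hζdef
    have hζpow : ζ ^ n = 1 := by
      rw [hζdef, ← Complex.exp_nat_mul, mul_div_cancel₀ _ hncne, Complex.exp_two_pi_mul_I]
    have hζne1 : ζ ≠ 1 := by
      intro hc
      rw [hζdef, Complex.exp_eq_one_iff] at hc
      obtain ⟨k, hk⟩ := hc
      have hpi : (2 * Real.pi * Complex.I : ℂ) ≠ 0 := Complex.two_pi_I_ne_zero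
      have hkn : (k:ℂ) * n = 1 := by
        field_simp at hk
        have hpi2 : (2 * (Real.pi:ℂ) * Complex.I) ≠ 0 := Complex.two_pi_I_ne_zero
        have h2 : (2 * (Real.pi:ℂ) * Complex.I) * ((k:ℂ) * n) =
            (2 * (Real.pi:ℂ) * Complex.I) * 1 := by linear_combination -(2 * (Real.pi:ℂ) * Complex.I) * hk
        exact mul_left_cancel₀ hpi2 h2
      have hkn' : (k * (n:ℤ) : ℤ) = 1 := by exact_mod_cast hkn
      have hdvd : (n:ℤ) ∣ 1 := ⟨k, by rw [← hkn']; ring⟩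
      have := Int.le_of_dvd one_pos hdvd
      omega
    have hζnorm : ‖ζ‖ = 1 := by
      have hre : (2 * (Real.pi:ℂ) * Complex.I / (n:ℂ)) = ((2*Real.pi/n : ℝ):ℂ) * Complex.I := by
        push_cast; ring
      rw [hζdef, hre, Complex.norm_exp_ofReal_mul_I]
    set t : ℂ := ((ε/2 : ℝ) : ℂ) with htdef
    have htn : ‖t‖ = ε/2 := by
      rw [htdef, Complex.norm_real, Real.norm_eq_abs, abs_of_pos (by linarith)]
    have htne : t ≠ 0 := by intro hc; rw [hc, norm_zero] at htn; linarith
    have ht_mem : t ∈ Metric.ball (0:ℂ) ε := by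
      rw [Metric.mem_ball, dist_zero_right, htn]; linarith
    have hζt_mem : ζ * t ∈ Metric.ball (0:ℂ) ε := by
      rw [Metric.mem_ball, dist_zero_right, norm_mul, hζnorm, one_mul, htn]; linarith
    obtain ⟨w1, hw1, hw1eq⟩ := hball ht_mem
    obtain ⟨w2, hw2, hw2eq⟩ := hball hζt_mem
    have hw1n : ‖w1‖ < t1 := by rwa [Metric.mem_ball, dist_zero_right] at hw1
    have hw2n : ‖w2‖ < t1 := by rwa [Metric.mem_ball, dist_zero_right] at hw2
    have hKeq : K' w1 = K' w2 := by
      rw [← hψpow w1 hw1n, ← hψpow w2 hw2n, hw1eq, hw2eq, mul_pow, hζpow, one_mul]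
    have hw1M : w1 ∈ Metric.ball (0:ℂ) M⁻¹ := by
      rw [Metric.mem_ball, dist_zero_right]
      exact lt_of_lt_of_le hw1n (min_le_right _ _)
    have hw2M : w2 ∈ Metric.ball (0:ℂ) M⁻¹ := by
      rw [Metric.mem_ball, dist_zero_right]
      exact lt_of_lt_of_le hw2n (min_le_right _ _)
    have hw12 : w1 = w2 := hK'inj hw1M hw2M hKeq
    rw [hw12, hw2eq] at hw1eq
    have h1t : ζ * t = 1 * t := by rw [hw1eq, one_mul]
    exact hζne1 (mul_right_cancel₀ htne h1t)
  -- n = 1 : growth bound at infinity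
  subst hn1
  have hu0pos : (0:ℝ) < ‖u 0‖ := norm_pos_iff.mpr hu0ne
  have hucont := (Metric.tendsto_nhds.mp hu_an.continuousAt.tendsto) (‖u 0‖/2) (by linarith)
  obtain ⟨t0, ht0, hprop⟩ := Metric.eventually_nhds_iff.mp (hueq.and hucont)
  set t1 := min t0 M⁻¹ with ht1def
  have ht1 : 0 < t1 := lt_min ht0 hMinv
  set C : ℝ := 2/‖u 0‖ with hCdef
  have hCpos : 0 < C := by positivity
  have hgrowth : ∀ w : ℂ, t1⁻¹ < ‖w‖ → ‖H w‖ ≤ C * ‖w‖ := by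
    intro w hw
    have hwpos : (0:ℝ) < ‖w‖ := lt_trans (inv_pos.mpr ht1) hw
    have hw0 : w ≠ 0 := norm_pos_iff.mp hwpos
    set z := w⁻¹ with hz
    have hz0 : z ≠ 0 := inv_ne_zero hw0
    have hzn : ‖z‖ = ‖w‖⁻¹ := norm_inv w
    have hznlt : ‖z‖ < t1 := by
      rw [hzn]; exact inv_lt_of_inv_lt₀ ht1 hw
    have hzM : ‖z‖ < M⁻¹ := lt_of_lt_of_le hznlt (min_le_right _ _)
    have hzd : dist z 0 < t0 := by
      rw [dist_zero_right]; exact lt_of_lt_of_le hznlt (min_le_left _ _)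
    obtain ⟨heq, hdist⟩ := hprop hzd
    rw [sub_zero, pow_one, smul_eq_mul] at heq
    have hd2 : ‖u z - u 0‖ < ‖u 0‖/2 := by rwa [dist_eq_norm] at hdist
    have hulow : ‖u 0‖/2 ≤ ‖u z‖ := by
      have := norm_sub_norm_le (u 0) (u z)
      rw [norm_sub_rev] at hd2
      linarith
    have hKz : K' z = (H w)⁻¹ := by
      rw [hK'K z hz0]
      show (H z⁻¹)⁻¹ = (H w)⁻¹
      rw [hz, inv_inv]
    have hHw1 : (1:ℝ) ≤ ‖H w‖ := by
      have := hKval z hz0 hzM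
      rwa [hz, inv_inv] at this
    have hHwne : H w ≠ 0 := by
      intro hc; rw [hc, norm_zero] at hHw1; linarith
    have hinveq : (H w)⁻¹ = z * u z := by rw [← hKz, heq]
    have hnormeq : ‖H w‖⁻¹ = ‖z‖ * ‖u z‖ := by
      rw [← norm_inv, hinveq, norm_mul]
    have hlow : ‖w‖⁻¹ * (‖u 0‖/2) ≤ ‖H w‖⁻¹ := by
      rw [hnormeq, hzn]
      have : (0:ℝ) ≤ ‖w‖⁻¹ := by positivity
      exact mul_le_mul_of_nonneg_left hulow this
    have hHpos : (0:ℝ) < ‖H w‖ := by linarith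
    rw [← inv_inv (‖H w‖)]
    have hlowpos : (0:ℝ) < ‖w‖⁻¹ * (‖u 0‖/2) := by positivity
    calc (‖H w‖⁻¹)⁻¹ ≤ (‖w‖⁻¹ * (‖u 0‖/2))⁻¹ := by
          exact inv_anti₀ hlowpos hlow
    _ = C * ‖w‖ := by
          rw [mul_inv, inv_inv, hCdef]
          field_simp
  -- Liouville for the dslope
  set D := dslope H 0 with hDdef
  have hDdiff : Differentiable ℂ D := by
    intro z
    rcases eq_or_ne z 0 with rfl | hz
    · obtain ⟨p, hp⟩ := hH.analyticAt 0
      exact hp.has_fpower_series_dslope_fslope.analyticAt.differentiableAt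
    · exact (differentiableAt_dslope_of_ne hz).mpr (hH.differentiableAt)
  set R0 : ℝ := max t1⁻¹ 1 with hR0def
  have hDfar : ∀ z : ℂ, R0 < ‖z‖ → ‖D z‖ ≤ C + ‖H 0‖ := by
    intro z hz
    have hz1 : (1:ℝ) < ‖z‖ := lt_of_le_of_lt (le_max_right _ _) hz
    have hzt : t1⁻¹ < ‖z‖ := lt_of_le_of_lt (le_max_left _ _) hz
    have hz0 : z ≠ 0 := norm_pos_iff.mp (by linarith)
    have hDval : D z = (H z - H 0)/z := by
      rw [hDdef, dslope_of_ne H hz0, slope_def_field, sub_zero]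
    rw [hDval, norm_div]
    have hnum : ‖H z - H 0‖ ≤ C * ‖z‖ + ‖H 0‖ := by
      have h1 : ‖H z - H 0‖ ≤ ‖H z‖ + ‖H 0‖ := norm_sub_le _ _
      have h2 := hgrowth z hzt
      linarith
    rw [div_le_iff₀ (by linarith)]
    have hH0 : (0:ℝ) ≤ ‖H 0‖ := norm_nonneg _
    nlinarith
  obtain ⟨C2, hC2⟩ := (isCompact_closedBall (0:ℂ) R0).exists_bound_of_continuousOn
    hDdiff.continuous.continuousOn
  have hbdd : IsBounded (Set.range D) := by
    rw [isBounded_iff_forall_norm_le]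
    refine ⟨max (C + ‖H 0‖) C2, ?_⟩
    rintro y ⟨z, rfl⟩
    by_cases hz : ‖z‖ ≤ R0
    · exact le_trans (hC2 z (by rwa [Metric.mem_closedBall, dist_zero_right])) (le_max_right _ _)
    · push_neg at hz
      exact le_trans (hDfar z hz) (le_max_left _ _)
  have hconst := hDdiff.apply_eq_apply_of_bounded hbdd
  set c := deriv H 0 with hcdef
  have hform : ∀ z : ℂ, H z = c * z + H 0 := by
    intro z
    rcases eq_or_ne z 0 with rfl | hz
    · ring
    · have h1 : D z = D 0 := hconst z 0
      have h2 : D 0 = c := by rw [hDdef, dslope_same]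
      have h3 : D z = (H z - H 0)/z := by
        rw [hDdef, dslope_of_ne H hz, slope_def_field, sub_zero]
      rw [h2, h3] at h1
      field_simp at h1
      linear_combination h1
  have hcne : c ≠ 0 := by
    intro hc
    have h1 : H 1 = H 0 := by rw [hform 1, hform 0, hc]; ring
    have := hinj h1
    simpa using this
  exact ⟨c, H 0, hcne, hform⟩


lemma aux_orbit {A : Set ℂ} (hA : IsClosed A) (hdisc : DiscreteTopology A)
    (p α d : ℂ) (hα : α ≠ 0) (hd : ‖d‖ ≤ 1)
    (hdinj : ∀ m k : ℕ, d ^ m = d ^ k → m = k)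
    (hmem : ∀ n : ℕ, p + d ^ n * α ∈ A) : False := by
  have hinj2 : Function.Injective (fun n : ℕ => p + d ^ n * α) := by
    intro m k e
    simp only at e
    have h1 : d ^ m * α = d ^ k * α := by linear_combination e
    exact hdinj m k (mul_right_cancel₀ hα h1)
  have hsub : ∀ n : ℕ, p + d ^ n * α ∈ A ∩ Metric.closedBall p ‖α‖ := by
    intro n
    refine ⟨hmem n, ?_⟩
    rw [Metric.mem_closedBall, dist_eq_norm, add_sub_cancel_left, norm_mul, norm_pow]
    have h1 : ‖d‖ ^ n ≤ 1 := pow_le_one₀ (norm_nonneg d) hd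
    nlinarith [norm_nonneg α, norm_nonneg d]
  have hfin := aux_compact_finite hA hdisc (isCompact_closedBall p ‖α‖)
  exact (Set.infinite_of_injective_forall_mem hinj2 hsub) hfin

/-- If `A ⊂ ℂ` is closed, discrete and infinite and `h` is a biholomorphic automorphism
of `ℂ \ A` (with holomorphic inverse `g`) of infinite order, then `h(z) = z + b` for some
nonzero `b`. -/
theorem stmt1 (A : Set ℂ) (hA : IsClosed A) (hdisc : DiscreteTopology A)
    (hinf : A.Infinite) (h g : ℂ → ℂ)
    (hmaps : Set.MapsTo h Aᶜ Aᶜ) (gmaps : Set.MapsTo g Aᶜ Aᶜ)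
    (hhol : DifferentiableOn ℂ h Aᶜ) (ghol : DifferentiableOn ℂ g Aᶜ)
    (hgh : ∀ z ∈ Aᶜ, g (h z) = z) (hhg : ∀ z ∈ Aᶜ, h (g z) = z)
    (hord : ∀ n : ℕ, 1 ≤ n → ∃ z ∈ Aᶜ, h^[n] z ≠ z) :
    ∃ b : ℂ, b ≠ 0 ∧ ∀ z ∈ Aᶜ, h z = z + b := by
  have hinjh : Set.InjOn h Aᶜ := fun x hx y hy e => by
    rw [← hgh x hx, ← hgh y hy, e]
  have hinjg : Set.InjOn g Aᶜ := fun x hx y hy e => by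
    rw [← hhg x hx, ← hhg y hy, e]
  obtain ⟨H, hHdiff, hHeq⟩ := aux_extension hA hhol
    (fun a ha => aux_bounded_near hA hdisc hinf hmaps hhol hinjh ha)
  obtain ⟨G, hGdiff, hGeq⟩ := aux_extension hA ghol
    (fun a ha => aux_bounded_near hA hdisc hinf gmaps ghol hinjg ha)
  -- A has dense complement
  have hdense : Dense Aᶜ := by
    rw [Metric.dense_iff]
    intro x r hr
    obtain ⟨r', hr', hav⟩ : ∃ r' > 0, ∀ z ∈ Metric.ball x r', z ≠ x → z ∉ A := by
      have hd : Disjoint (𝓝[≠] x) (𝓟 A) := (isClosed_and_discrete_iff.mp ⟨hA, isDiscrete_iff_discreteTopology.mpr hdisc⟩) x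
      have h2 : Aᶜ ∈ 𝓝[≠] x := disjoint_principal_right.mp hd
      rw [Metric.mem_nhdsWithin_iff] at h2
      obtain ⟨r'', hr'', hsub⟩ := h2
      exact ⟨r'', hr'', fun z hz hne => hsub ⟨hz, hne⟩⟩
    set m : ℝ := min r r' / 2 with hm
    have hmpos : 0 < m := half_pos (lt_min hr hr')
    have hdist : dist (x + (m:ℂ)) x = m := by
      rw [dist_eq_norm, add_sub_cancel_left, Complex.norm_real, Real.norm_eq_abs, abs_of_pos hmpos]
    have hmr : m < r :=
      lt_of_lt_of_le (by simpa using half_lt_self (lt_min hr hr')) (min_le_left _ _)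
    have hmr' : m < r' :=
      lt_of_lt_of_le (by simpa using half_lt_self (lt_min hr hr')) (min_le_right _ _)
    have hne : x + (m:ℂ) ≠ x := by
      intro hcon
      have : (m:ℂ) = 0 := by linear_combination hcon
      exact hmpos.ne' (by exact_mod_cast this)
    refine ⟨x + (m:ℂ), ?_, hav _ (by rw [Metric.mem_ball, hdist]; exact hmr') hne⟩
    rw [Metric.mem_ball, hdist]; exact hmr
  -- G ∘ H = id and H ∘ G = id
  have hGH : ∀ z : ℂ, G (H z) = z := by
    have hfun : (fun z => G (H z)) = (fun z : ℂ => z) := by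
      apply Continuous.ext_on hdense (hGdiff.continuous.comp hHdiff.continuous) continuous_id
      intro z hz
      show G (H z) = z
      have h1 : H z = h z := hHeq z hz
      have h2 : h z ∈ Aᶜ := hmaps hz
      simp only [h1, hGeq _ h2, hgh z hz, id_eq]
    exact fun z => congrFun hfun z
  have hHG : ∀ z : ℂ, H (G z) = z := by
    have hfun : (fun z => H (G z)) = (fun z : ℂ => z) := by
      apply Continuous.ext_on hdense (hHdiff.continuous.comp hGdiff.continuous) continuous_id
      intro z hz
      show H (G z) = z
      have h2 : g z ∈ Aᶜ := gmaps hz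
      simp only [hGeq z hz, hHeq _ h2, hhg z hz, id_eq]
    exact fun z => congrFun hfun z
  have hHinj : Function.Injective H := fun x y e => by rw [← hGH x, ← hGH y, e]
  obtain ⟨c, b, hc, hform⟩ := aux_affine hHdiff hGdiff hGH
  -- A is invariant
  have hHA : ∀ a ∈ A, H a ∈ A := by
    intro a ha
    by_contra hx
    have hx' : H a ∈ Aᶜ := hx
    have h1 : G (H a) = g (H a) := hGeq _ hx'
    have h2 : g (H a) ∈ Aᶜ := gmaps hx'
    rw [← h1, hGH a] at h2
    exact h2 ha
  have hGA : ∀ a ∈ A, G a ∈ A := by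
    intro a ha
    by_contra hx
    have hx' : G a ∈ Aᶜ := hx
    have h1 : H (G a) = h (G a) := hHeq _ hx'
    have h2 : h (G a) ∈ Aᶜ := hmaps hx'
    rw [← h1, hHG a] at h2
    exact h2 ha
  by_cases hc1 : c = 1
  · -- translation case
    have hb0 : b ≠ 0 := by
      intro hb
      obtain ⟨z, hz, hne⟩ := hord 1 le_rfl
      apply hne
      rw [Function.iterate_one, ← hHeq z hz, hform z, hc1, hb]
      ring
    refine ⟨b, hb0, fun z hz => ?_⟩
    rw [← hHeq z hz, hform z, hc1, one_mul]
  · exfalso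
    have h1c : (1:ℂ) - c ≠ 0 := fun hcon => hc1 (by linear_combination -hcon)
    set p : ℂ := b / (1 - c) with hp
    have hbp : b = p * (1 - c) := by
      rw [hp]; field_simp
    have hHp : ∀ z : ℂ, H z = p + c * (z - p) := by
      intro z; rw [hform z]; linear_combination hbp
    have hGp : ∀ z : ℂ, G z = p + c⁻¹ * (z - p) := by
      intro z
      apply hHinj
      rw [hHG z, hHp]
      field_simp
      ring
    have hHiter : ∀ (n : ℕ) (z : ℂ), H^[n] z = p + c ^ n * (z - p) := by
      intro n
      induction n with
      | zero => intro z; simp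
      | succ k ih =>
        intro z
        rw [Function.iterate_succ_apply', ih, hHp]
        ring
    have hGiter : ∀ (n : ℕ) (z : ℂ), G^[n] z = p + (c⁻¹) ^ n * (z - p) := by
      intro n
      induction n with
      | zero => intro z; simp
      | succ k ih =>
        intro z
        rw [Function.iterate_succ_apply', ih, hGp]
        ring
    by_cases hroot : ∃ n : ℕ, 1 ≤ n ∧ c ^ n = 1
    · obtain ⟨n, hn1, hcn⟩ := hroot
      have hHn : ∀ z : ℂ, H^[n] z = z := by
        intro z; rw [hHiter n z, hcn]; ring
      have hIter_eq : ∀ (m : ℕ) (z : ℂ), z ∈ Aᶜ → h^[m] z ∈ Aᶜ ∧ h^[m] z = H^[m] z := by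
        intro m
        induction m with
        | zero => intro z hz; exact ⟨hz, rfl⟩
        | succ k ih =>
          intro z hz
          obtain ⟨h1, h2⟩ := ih z hz
          rw [Function.iterate_succ_apply', Function.iterate_succ_apply']
          refine ⟨hmaps h1, ?_⟩
          rw [← hHeq _ h1, h2]
      obtain ⟨z, hz, hne⟩ := hord n hn1
      exact hne (((hIter_eq n z hz).2).trans (hHn z))
    · push_neg at hroot
      have hkey : ∀ m k : ℕ, m < k → c ^ m ≠ c ^ k := by
        intro m k hmk he
        have h1 : c ^ m * c ^ (k - m) = c ^ m * 1 := by
          rw [mul_one, ← pow_add]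
          rw [show m + (k - m) = k by omega]
          exact he.symm
        have h2 : c ^ (k - m) = 1 := mul_left_cancel₀ (pow_ne_zero m hc) h1
        exact hroot (k - m) (by omega) h2
      have hpowinj : ∀ m k : ℕ, c ^ m = c ^ k → m = k := by
        intro m k he
        rcases lt_trichotomy m k with hlt | heq | hgt
        · exact absurd he (hkey m k hlt)
        · exact heq
        · exact absurd he.symm (hkey k m hgt)
      obtain ⟨a0, ha0⟩ := (hinf.diff (Set.finite_singleton p)).nonempty
      have ha0A : a0 ∈ A := ha0.1
      have ha0p : a0 - p ≠ 0 := sub_ne_zero.mpr (by simpa using ha0.2)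
      by_cases hcnorm : ‖c‖ ≤ 1
      · have hmem : ∀ n : ℕ, p + c ^ n * (a0 - p) ∈ A := by
          intro n
          have h1 : H^[n] a0 ∈ A := by
            induction n with
            | zero => exact ha0A
            | succ k ih =>
              rw [Function.iterate_succ_apply']
              exact hHA _ ih
          rwa [hHiter n a0] at h1
        exact aux_orbit hA hdisc p (a0 - p) c ha0p hcnorm hpowinj hmem
      · push_neg at hcnorm
        have hcinv : ‖c⁻¹‖ ≤ 1 := by
          rw [norm_inv]
          rw [inv_le_one_iff₀]
          right; linarith
        have hinvinj : ∀ m k : ℕ, c⁻¹ ^ m = c⁻¹ ^ k → m = k := by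
          intro m k he
          rw [inv_pow, inv_pow] at he
          exact hpowinj m k (inv_injective he)
        have hmem : ∀ n : ℕ, p + c⁻¹ ^ n * (a0 - p) ∈ A := by
          intro n
          have h1 : G^[n] a0 ∈ A := by
            induction n with
            | zero => exact ha0A
            | succ k ih =>
              rw [Function.iterate_succ_apply']
              exact hGA _ ih
          rwa [hGiter n a0] at h1
        exact aux_orbit hA hdisc p (a0 - p) c⁻¹ ha0p hcinv hinvinj hmem
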